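/- (Proposition 3.2, Gavrilov–Iliev) Let J ⊆ ℝ be an open interval, let a₁, a₂, R : J → ℝ be real-analytic, and suppose: (a) there exists a solution x₀ of the homogeneous equation x'' + a₁(t)x' + a₂(t)x = 0 with x₀(t) ≠ 0 for all t ∈ J (so the homogeneous solution space is a Chebyshev space); (b) R is not identically zero and has exactly l zeros in J counted with multiplicity (l finite). Then every solution x : J → ℝ of x'' + a₁(t)x' + a₂(t)x = R(t) has at most l + 2 zeros in J counted with multiplicity. -/

import Mathlib

/-- `f` solves `f'' + a₁ f' + a₂ f = R` on the open set `J`. -/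
def IsSolutionOn (J : Set ℝ) (a₁ a₂ R f : ℝ → ℝ) : Prop :=
  (∀ t ∈ J, DifferentiableAt ℝ f t) ∧
  (∀ t ∈ J, DifferentiableAt ℝ (deriv f) t) ∧
  (∀ t ∈ J, deriv (deriv f) t + a₁ t * deriv f t + a₂ t * f t = R t)

/-- Vanishing order of `f` at `t`: the least `k` with `f⁽ᵏ⁾(t) ≠ 0`
(equals the multiplicity of the zero `t` when `f(t) = 0`, and `0` otherwise). -/
noncomputable def zeroOrder (f : ℝ → ℝ) (t : ℝ) : ℕ :=
  sInf {k : ℕ | iteratedDeriv k f t ≠ 0}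

/-- `f` has exactly `l` zeros in `J`, counted with multiplicity. -/
def ZerosCountEq (J : Set ℝ) (f : ℝ → ℝ) (l : ℕ) : Prop :=
  ∃ Z : Finset ℝ, (∀ t : ℝ, t ∈ Z ↔ t ∈ J ∧ f t = 0) ∧ ∑ t ∈ Z, zeroOrder f t = l

/-- `f` has at most `l` zeros in `J`, counted with multiplicity. -/
def ZerosCountLE (J : Set ℝ) (f : ℝ → ℝ) (l : ℕ) : Prop :=
  ∃ Z : Finset ℝ, (∀ t : ℝ, t ∈ Z ↔ t ∈ J ∧ f t = 0) ∧ ∑ t ∈ Z, zeroOrder f t ≤ l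

namespace Stmt12Aux

open Set Filter Topology

/-- all derivatives of index below `m` vanish at `t` -/
def OrdGE (f : ℝ → ℝ) (t : ℝ) (m : ℕ) : Prop := ∀ k < m, iteratedDeriv k f t = 0

/-- smooth on U -/
def Sm (U : Set ℝ) (f : ℝ → ℝ) : Prop := ∀ n : ℕ, ContDiffOn ℝ n f U

lemma Sm.const (U : Set ℝ) (c : ℝ) : Sm U (fun _ => c) := fun _ => contDiffOn_const

lemma Sm.diffAt {U f} (hU : IsOpen U) (h : Sm U f) {t : ℝ} (ht : t ∈ U) :
    DifferentiableAt ℝ f t := by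
  have := (h 1).differentiableOn (by norm_num)
  exact this.differentiableAt (hU.mem_nhds ht)

lemma Sm.deriv {U f} (hU : IsOpen U) (h : Sm U f) : Sm U (deriv f) := by
  intro n
  have h' := h (n + 1)
  rw [show ((n + 1 : ℕ) : WithTop ℕ∞) = (n : WithTop ℕ∞) + 1 by norm_cast] at h'
  exact ((contDiffOn_succ_iff_deriv_of_isOpen hU).1 h').2.2

lemma Sm.mul {U f g} (hf : Sm U f) (hg : Sm U g) : Sm U (fun s => f s * g s) :=
  fun n => (hf n).mul (hg n)

lemma Sm.inv {U f} (hf : Sm U f) (hne : ∀ t ∈ U, f t ≠ 0) : Sm U (fun s => (f s)⁻¹) :=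
  fun n => (hf n).inv hne

lemma Sm.exp {U f} (hf : Sm U f) : Sm U (fun s => Real.exp (f s)) :=
  fun n => (hf n).exp

lemma iteratedDerivWithin_of_isOpen' {U : Set ℝ} (hU : IsOpen U) {f : ℝ → ℝ} {n : ℕ}
    {t : ℝ} (ht : t ∈ U) : iteratedDerivWithin n f U t = iteratedDeriv n f t := by
  rw [iteratedDerivWithin, iteratedDeriv, iteratedFDerivWithin_of_isOpen n hU ht]

lemma OrdGE.of_le {f t m m'} (h : OrdGE f t m) (hm : m' ≤ m) : OrdGE f t m' :=
  fun k hk => h k (lt_of_lt_of_le hk hm)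

lemma OrdGE.deriv {f t m} (h : OrdGE f t m) : OrdGE (_root_.deriv f) t (m - 1) := by
  intro k hk
  rw [← iteratedDeriv_succ']
  exact h (k + 1) (by omega)

lemma OrdGE.congr {U : Set ℝ} (hU : IsOpen U) {f g : ℝ → ℝ} {t m} (ht : t ∈ U)
    (hfg : Set.EqOn f g U) (h : OrdGE f t m) : OrdGE g t m := by
  intro k hk
  rw [← (hfg.iteratedDeriv_of_isOpen hU k) ht]
  exact h k hk

lemma zero_of_ordGE {f : ℝ → ℝ} {t m} (h : OrdGE f t m) (hm : 1 ≤ m) : f t = 0 := by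
  simpa [iteratedDeriv_zero] using h 0 hm

lemma ordGE_mul {U : Set ℝ} (hU : IsOpen U) {t : ℝ} (ht : t ∈ U) :
    ∀ (m : ℕ) (g f : ℝ → ℝ), Sm U g → Sm U f → OrdGE f t m →
      OrdGE (fun s => g s * f s) t m := by
  intro m
  induction m with
  | zero => intro g f _ _ _ k hk; omega
  | succ m IH =>
    intro g f hg hf hord k hk
    match k with
    | 0 =>
      have hf0 : f t = 0 := by simpa [iteratedDeriv_zero] using hord 0 (by omega)
      simp [iteratedDeriv_zero, hf0]
    | (k + 1) =>
      rw [iteratedDeriv_succ']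
      have heq : Set.EqOn (_root_.deriv fun s => g s * f s)
          (fun s => _root_.deriv g s * f s + g s * _root_.deriv f s) U := by
        intro s hs
        exact deriv_mul (hg.diffAt hU hs) (hf.diffAt hU hs)
      rw [(heq.iteratedDeriv_of_isOpen hU k) ht]
      have hA : OrdGE (fun s => _root_.deriv g s * f s) t m :=
        IH (_root_.deriv g) f (hg.deriv hU) hf (hord.of_le (by omega))
      have hB : OrdGE (fun s => g s * _root_.deriv f s) t m :=
        IH g (_root_.deriv f) hg (hf.deriv hU) (by simpa using hord.deriv)
      have hsum : iteratedDeriv k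
          (fun s => _root_.deriv g s * f s + g s * _root_.deriv f s) t
          = iteratedDeriv k (fun s => _root_.deriv g s * f s) t
            + iteratedDeriv k (fun s => g s * _root_.deriv f s) t := by
        rw [← iteratedDerivWithin_of_isOpen' hU ht, ← iteratedDerivWithin_of_isOpen' hU ht,
          ← iteratedDerivWithin_of_isOpen' hU ht]
        exact iteratedDerivWithin_add ht hU.uniqueDiffOn
          ((((hg.deriv hU).mul hf) k) t ht) (((hg.mul (hf.deriv hU)) k) t ht)
      rw [hsum, hA k (by omega), hB k (by omega), add_zero]

/-- f has at least n zeros counted with multiplicity in J -/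
def MZ (J : Set ℝ) (f : ℝ → ℝ) (n : ℕ) : Prop :=
  ∃ (Z : Finset ℝ) (m : ℝ → ℕ), (∀ t ∈ Z, t ∈ J) ∧ (∀ t ∈ Z, 1 ≤ m t) ∧
    (∀ t ∈ Z, OrdGE f t (m t)) ∧ n ≤ ∑ t ∈ Z, m t

lemma rolle_step {J : Set ℝ} (hJo : IsOpen J) (hJc : Convex ℝ J) {f : ℝ → ℝ}
    (hfd : ∀ t ∈ J, DifferentiableAt ℝ f t) :
    ∀ (N : ℕ) (Z : Finset ℝ), Z.card ≤ N → Z.Nonempty → ∀ m : ℝ → ℕ,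
      (∀ t ∈ Z, t ∈ J) → (∀ t ∈ Z, 1 ≤ m t) → (∀ t ∈ Z, OrdGE f t (m t)) →
      ∃ (Z' : Finset ℝ) (m' : ℝ → ℕ), (∀ t ∈ Z', t ∈ J) ∧
        (∀ t ∈ Z', OrdGE (_root_.deriv f) t (m' t)) ∧
        (∀ t ∈ Z', ∃ u ∈ Z, t ≤ u) ∧
        (∑ t ∈ Z, m t) - 1 ≤ ∑ t ∈ Z', m' t := by
  intro N
  induction N with
  | zero =>
    intro Z hcard hne
    exact absurd (Finset.card_pos.2 hne) (by omega)
  | succ N IH =>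
    intro Z hcard hne m hZJ hm1 hord
    set tb := Z.max' hne with htb
    have htbZ : tb ∈ Z := Z.max'_mem hne
    by_cases hZe : (Z.erase tb).Nonempty
    · -- at least two points
      set tc := (Z.erase tb).max' hZe with htc
      have htcZe : tc ∈ Z.erase tb := Finset.max'_mem _ hZe
      have htcZ : tc ∈ Z := Finset.mem_of_mem_erase htcZe
      have htcne : tc ≠ tb := Finset.ne_of_mem_erase htcZe
      have htclt : tc < tb := lt_of_le_of_ne (Z.le_max' tc htcZ) htcne
      have hcard' : (Z.erase tb).card ≤ N := by
        have := Finset.card_erase_of_mem htbZ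
        have := Finset.card_pos.2 hne
        omega
      obtain ⟨Z'', m'', hZ''J, hord'', hbd'', hsum''⟩ :=
        IH (Z.erase tb) hcard' hZe m (fun t ht => hZJ t (Finset.mem_of_mem_erase ht))
          (fun t ht => hm1 t (Finset.mem_of_mem_erase ht))
          (fun t ht => hord t (Finset.mem_of_mem_erase ht))
      -- all points of Z'' are ≤ tc
      have hZ''le : ∀ t ∈ Z'', t ≤ tc := by
        intro t ht
        obtain ⟨u, hu, htu⟩ := hbd'' t ht
        exact le_trans htu (Finset.le_max' _ u hu)
      -- Rolle between tc and tb
      have hIcc : Set.Icc tc tb ⊆ J := hJc.ordConnected.out (hZJ tc htcZ) (hZJ tb htbZ)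
      have hfc : ContinuousOn f (Set.Icc tc tb) := fun s hs =>
        (hfd s (hIcc hs)).continuousAt.continuousWithinAt
      have hfcb : f tc = f tb := by
        rw [zero_of_ordGE (hord tc htcZ) (hm1 tc htcZ),
          zero_of_ordGE (hord tb htbZ) (hm1 tb htbZ)]
      obtain ⟨s, hsIoo, hsderiv⟩ := exists_deriv_eq_zero htclt hfc hfcb
      have hsJ : s ∈ J := hIcc (Set.Ioo_subset_Icc_self hsIoo)
      have hs1 : tc < s := hsIoo.1
      have hs2 : s < tb := hsIoo.2
      have hsnotZ'' : s ∉ Z'' := fun h => absurd (hZ''le s h) (not_le.2 hs1)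
      have htbnot : tb ∉ insert s Z'' := by
        intro h
        rcases Finset.mem_insert.1 h with h | h
        · exact absurd h (ne_of_gt hs2)
        · exact absurd (hZ''le tb h) (not_le.2 (lt_trans hs1 hs2))
      classical
      refine ⟨insert tb (insert s Z''),
        (fun u => if u = tb then m tb - 1 else if u = s then 1 else m'' u), ?_, ?_, ?_, ?_⟩
      · intro t ht
        rcases Finset.mem_insert.1 ht with rfl | ht
        · exact hZJ tb htbZ
        rcases Finset.mem_insert.1 ht with rfl | ht
        · exact hsJ
        · exact hZ''J t ht
      · intro t ht
        rcases Finset.mem_insert.1 ht with rfl | ht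
        · simpa using (hord tb htbZ).deriv
        rcases Finset.mem_insert.1 ht with rfl | ht
        · have h1 : t ≠ tb := ne_of_lt hs2
          intro k hk
          have hk' : k < (if t = tb then m tb - 1 else if t = t then 1 else m'' t) := hk
          rw [if_neg h1, if_pos rfl] at hk'
          obtain rfl : k = 0 := by omega
          simpa [iteratedDeriv_zero] using hsderiv
        · have h1 : t ≠ tb := ne_of_lt (lt_of_le_of_lt (hZ''le t ht) (lt_trans hs1 hs2))
          have h2 : t ≠ s := ne_of_lt (lt_of_le_of_lt (hZ''le t ht) hs1)
          simpa only [if_neg h1, if_neg h2] using hord'' t ht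
      · intro t ht
        refine ⟨tb, htbZ, ?_⟩
        rcases Finset.mem_insert.1 ht with rfl | ht
        · exact le_refl _
        rcases Finset.mem_insert.1 ht with rfl | ht
        · exact le_of_lt hs2
        · exact le_trans (hZ''le t ht) (le_of_lt (lt_trans hs1 hs2))
      · rw [Finset.sum_insert htbnot, Finset.sum_insert hsnotZ'']
        have e1 : ∑ t ∈ Z'', (if t = tb then m tb - 1 else if t = s then 1 else m'' t)
            = ∑ t ∈ Z'', m'' t := by
          refine Finset.sum_congr rfl (fun t ht => ?_)
          have h1 : t ≠ tb := ne_of_lt (lt_of_le_of_lt (hZ''le t ht) (lt_trans hs1 hs2))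
          have h2 : t ≠ s := ne_of_lt (lt_of_le_of_lt (hZ''le t ht) hs1)
          simp [h1, h2]
        rw [e1]
        have e2 : m tb + ∑ t ∈ Z.erase tb, m t = ∑ t ∈ Z, m t :=
          Finset.add_sum_erase _ _ htbZ
        have e3 : 1 ≤ ∑ t ∈ Z.erase tb, m t :=
          le_trans (hm1 tc htcZ) (Finset.single_le_sum (fun t _ => Nat.zero_le _) htcZe)
        have e4 : 1 ≤ m tb := hm1 tb htbZ
        rw [if_pos rfl, if_neg (ne_of_lt hs2 : s ≠ tb), if_pos rfl]
        omega
    · -- Z is a singleton {tb}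
      have hZsingle : Z = {tb} := by
        apply Finset.eq_singleton_iff_unique_mem.2
        refine ⟨htbZ, fun u hu => ?_⟩
        by_contra h
        exact hZe ⟨u, Finset.mem_erase.2 ⟨h, hu⟩⟩
      refine ⟨{tb}, fun u => m u - 1, ?_, ?_, ?_, ?_⟩
      · intro t ht
        rw [Finset.mem_singleton] at ht
        subst ht; exact hZJ tb htbZ
      · intro t ht
        rw [Finset.mem_singleton] at ht
        subst ht; exact (hord tb htbZ).deriv
      · intro t ht
        rw [Finset.mem_singleton] at ht
        subst ht; exact ⟨tb, htbZ, le_refl _⟩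
      · rw [hZsingle]; simp

lemma MZ.deriv {J : Set ℝ} (hJo : IsOpen J) (hJc : Convex ℝ J) {f : ℝ → ℝ}
    (hfd : ∀ t ∈ J, DifferentiableAt ℝ f t) {n : ℕ} (h : MZ J f (n + 1)) :
    MZ J (_root_.deriv f) n := by
  classical
  obtain ⟨Z, m, hZJ, hm1, hord, hsum⟩ := h
  have hne : Z.Nonempty := by
    rcases Finset.eq_empty_or_nonempty Z with rfl | h
    · simp at hsum
    · exact h
  obtain ⟨Z', m', hZ'J, hord', _, hsum'⟩ :=
    rolle_step hJo hJc hfd Z.card Z le_rfl hne m hZJ hm1 hord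
  refine ⟨Z'.filter (fun t => m' t ≠ 0), m', ?_, ?_, ?_, ?_⟩
  · intro t ht; exact hZ'J t (Finset.mem_filter.1 ht).1
  · intro t ht; have := (Finset.mem_filter.1 ht).2; omega
  · intro t ht; exact hord' t (Finset.mem_filter.1 ht).1
  · rw [Finset.sum_filter_ne_zero]
    omega

lemma MZ.mul_left {J : Set ℝ} (hJo : IsOpen J) {g f : ℝ → ℝ} {n : ℕ}
    (hg : Sm J g) (hf : Sm J f) (h : MZ J f n) : MZ J (fun s => g s * f s) n := by
  obtain ⟨Z, m, hZJ, hm1, hord, hsum⟩ := h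
  exact ⟨Z, m, hZJ, hm1, fun t ht => ordGE_mul hJo (hZJ t ht) (m t) g f hg hf (hord t ht), hsum⟩

lemma MZ.congr {J : Set ℝ} (hJo : IsOpen J) {f g : ℝ → ℝ} {n : ℕ}
    (hfg : Set.EqOn f g J) (h : MZ J f n) : MZ J g n := by
  obtain ⟨Z, m, hZJ, hm1, hord, hsum⟩ := h
  exact ⟨Z, m, hZJ, hm1, fun t ht => (hord t ht).congr hJo (hZJ t ht) hfg, hsum⟩

lemma smooth_of_ode {J : Set ℝ} (hJo : IsOpen J) {a₁ a₂ g f : ℝ → ℝ}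
    (ha₁ : Sm J a₁) (ha₂ : Sm J a₂) (hg : Sm J g)
    (h1 : ∀ t ∈ J, DifferentiableAt ℝ f t) (h2 : ∀ t ∈ J, DifferentiableAt ℝ (deriv f) t)
    (h3 : ∀ t ∈ J, deriv (deriv f) t + a₁ t * deriv f t + a₂ t * f t = g t) :
    Sm J f := by
  have key : ∀ n : ℕ, ContDiffOn ℝ n f J ∧ ContDiffOn ℝ n (deriv f) J := by
    intro n
    induction n with
    | zero =>
      rw [Nat.cast_zero, contDiffOn_zero, contDiffOn_zero]
      exact ⟨fun t ht => (h1 t ht).continuousAt.continuousWithinAt,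
        fun t ht => (h2 t ht).continuousAt.continuousWithinAt⟩
    | succ n IH =>
      obtain ⟨hfn, hdfn⟩ := IH
      have hdd : ContDiffOn ℝ n (deriv (deriv f)) J := by
        refine ContDiffOn.congr
          (((hg n).sub ((ha₁ n).mul hdfn)).sub ((ha₂ n).mul hfn)) (fun t ht => ?_)
        have := h3 t ht
        linarith
      have hcast : ((n + 1 : ℕ) : WithTop ℕ∞) = (n : WithTop ℕ∞) + 1 := by norm_cast
      constructor
      · rw [hcast, contDiffOn_succ_iff_deriv_of_isOpen hJo]
        exact ⟨fun t ht => (h1 t ht).differentiableWithinAt,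
          fun h => absurd h (by simp), hdfn⟩
      · rw [hcast, contDiffOn_succ_iff_deriv_of_isOpen hJo]
        exact ⟨fun t ht => (h2 t ht).differentiableWithinAt,
          fun h => absurd h (by simp), hdd⟩
  exact fun n => (key n).1

/-- existence of an antiderivative of a continuous function on an open convex set -/
lemma exists_antideriv {J : Set ℝ} (hJo : IsOpen J) (hJc : Convex ℝ J) {a : ℝ → ℝ}
    (ha : ContinuousOn a J) {t₀ : ℝ} (ht₀ : t₀ ∈ J) :
    ∃ A : ℝ → ℝ, ∀ t ∈ J, HasDerivAt A (a t) t := by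
  refine ⟨fun t => ∫ s in t₀..t, a s, fun t ht => ?_⟩
  have huIcc : Set.uIcc t₀ t ⊆ J := hJc.ordConnected.uIcc_subset ht₀ ht
  have hint : IntervalIntegrable a MeasureTheory.volume t₀ t :=
    (ha.mono huIcc).intervalIntegrable
  have hmeas : StronglyMeasurableAtFilter a (𝓝 t) :=
    ha.stronglyMeasurableAtFilter hJo t ht
  exact intervalIntegral.integral_hasDerivAt_right hint hmeas (ha.continuousAt (hJo.mem_nhds ht))

/-- an analytic function with all iterated derivatives vanishing at a point is
eventually zero near that point -/
lemma eventually_zero_of_iteratedDeriv_zero {f : ℝ → ℝ} {t : ℝ}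
    (hf : AnalyticAt ℝ f t) (h : ∀ k, iteratedDeriv k f t = 0) :
    ∀ᶠ s in nhds t, f s = 0 := by
  obtain ⟨p, hp⟩ := hf
  obtain ⟨r, hpr⟩ := hp
  have hball : Metric.eball t r ∈ 𝓝 t := Metric.eball_mem_nhds t hpr.r_pos
  filter_upwards [hball] with s hs
  have hy : s - t ∈ Metric.eball (0 : ℝ) r := by
    have he : edist (s - t) (0 : ℝ) = edist s t := by
      rw [show (0 : ℝ) = t - t by ring, edist_sub_right]
    simpa [Metric.mem_eball, he] using hs
  have hsum := hpr.hasSum_iteratedFDeriv hy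
  have hterm : ∀ n : ℕ,
      ((n.factorial : ℝ)⁻¹ • iteratedFDeriv ℝ n f t fun _ => s - t) = 0 := by
    intro n
    have hdiag : (iteratedFDeriv ℝ n f t fun _ => s - t)
        = (s - t) ^ n • iteratedDeriv n f t := by
      have hfun : (fun _ : Fin n => s - t) = fun _ : Fin n => (s - t) • (1 : ℝ) := by
        funext i; simp
      rw [hfun, (iteratedFDeriv ℝ n f t).map_smul_univ, iteratedDeriv_eq_iteratedFDeriv]
      simp [Finset.prod_const]
    rw [hdiag, h n]
    simp
  rw [show t + (s - t) = s by ring] at hsum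
  have hfun : (fun n : ℕ => (n.factorial : ℝ)⁻¹ • iteratedFDeriv ℝ n f t fun _ => s - t)
      = fun _ : ℕ => (0 : ℝ) := funext hterm
  rw [hfun] at hsum
  exact hsum.unique hasSum_zero

end Stmt12Aux

open Stmt12Aux Set Filter Topology in
theorem stmt12 (J : Set ℝ) (hJo : IsOpen J) (hJc : Convex ℝ J)
    (a₁ a₂ R : ℝ → ℝ)
    (ha₁ : AnalyticOnNhd ℝ a₁ J) (ha₂ : AnalyticOnNhd ℝ a₂ J) (hR : AnalyticOnNhd ℝ R J)
    (x₀ : ℝ → ℝ) (hx₀sol : IsSolutionOn J a₁ a₂ (fun _ => 0) x₀)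
    (hx₀ne : ∀ t ∈ J, x₀ t ≠ 0)
    (hRne : ∃ t ∈ J, R t ≠ 0)
    (l : ℕ) (hRzeros : ZerosCountEq J R l) :
    ∀ x : ℝ → ℝ, IsSolutionOn J a₁ a₂ R x → ZerosCountLE J x (l + 2) := by
  classical
  intro x hxsol
  obtain ⟨hx1, hx2, hx3⟩ := hxsol
  obtain ⟨hx₀1, hx₀2, hx₀3⟩ := hx₀sol
  obtain ⟨t₀, ht₀J, -⟩ := id hRne
  -- smoothness of all data
  have ha₁Sm : Sm J a₁ := fun n => ha₁.contDiffOn hJo.uniqueDiffOn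
  have ha₂Sm : Sm J a₂ := fun n => ha₂.contDiffOn hJo.uniqueDiffOn
  have hRSm : Sm J R := fun n => hR.contDiffOn hJo.uniqueDiffOn
  have hxSm : Sm J x := smooth_of_ode hJo ha₁Sm ha₂Sm hRSm hx1 hx2 hx3
  have hx₀Sm : Sm J x₀ :=
    smooth_of_ode hJo ha₁Sm ha₂Sm (Sm.const J 0) hx₀1 hx₀2 hx₀3
  -- antiderivative of a₁
  obtain ⟨A, hA⟩ := exists_antideriv hJo hJc ((ha₁Sm 0).continuousOn) ht₀J
  have hderivA : Set.EqOn (deriv A) a₁ J := fun t ht => (hA t ht).deriv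
  have hASm : Sm J A := by
    intro n
    match n with
    | 0 =>
      rw [Nat.cast_zero, contDiffOn_zero]
      exact fun t ht => (hA t ht).differentiableAt.continuousAt.continuousWithinAt
    | (n + 1) =>
      rw [show ((n + 1 : ℕ) : WithTop ℕ∞) = (n : WithTop ℕ∞) + 1 by norm_cast,
        contDiffOn_succ_iff_deriv_of_isOpen hJo]
      exact ⟨fun t ht => (hA t ht).differentiableAt.differentiableWithinAt,
        fun h => absurd h (by simp), (ha₁Sm n).congr hderivA⟩
  have hESm : Sm J (fun s => Real.exp (A s)) := hASm.exp
  -- auxiliary functions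
  set y : ℝ → ℝ := fun s => (x₀ s)⁻¹ * x s with hy_def
  have hySm : Sm J y := (hx₀Sm.inv hx₀ne).mul hxSm
  set g₁ : ℝ → ℝ := fun s => x₀ s * x₀ s * Real.exp (A s) with hg₁_def
  have hg₁Sm : Sm J g₁ := (hx₀Sm.mul hx₀Sm).mul hESm
  set w : ℝ → ℝ := fun s => g₁ s * deriv y s with hw_def
  have hwSm : Sm J w := hg₁Sm.mul (hySm.deriv hJo)
  -- the key calculus computation : deriv w = x₀ ⬝ e^A ⬝ R on J
  have hwV : Set.EqOn w
      (fun s => Real.exp (A s) * (deriv x s * x₀ s - x s * deriv x₀ s)) J := by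
    intro u hu
    have hu₀ := hx₀ne u hu
    have hdyu : HasDerivAt y
        (-(deriv x₀ u) / (x₀ u) ^ 2 * x u + (x₀ u)⁻¹ * deriv x u) u :=
      (((hx₀1 u hu).hasDerivAt.inv hu₀).mul (hx1 u hu).hasDerivAt)
    have hdy : deriv y u = -(deriv x₀ u) / (x₀ u) ^ 2 * x u + (x₀ u)⁻¹ * deriv x u :=
      hdyu.deriv
    show x₀ u * x₀ u * Real.exp (A u) * deriv y u = _
    rw [hdy]
    field_simp
    ring
  have hkey : Set.EqOn (deriv w) (fun s => x₀ s * Real.exp (A s) * R s) J := by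
    intro t ht
    have hVd : HasDerivAt
        (fun s => Real.exp (A s) * (deriv x s * x₀ s - x s * deriv x₀ s))
        (Real.exp (A t) * a₁ t * (deriv x t * x₀ t - x t * deriv x₀ t)
          + Real.exp (A t) * ((deriv (deriv x) t * x₀ t + deriv x t * deriv x₀ t)
            - (deriv x t * deriv x₀ t + x t * deriv (deriv x₀) t))) t :=
      ((hA t ht).exp.mul
        (((hx2 t ht).hasDerivAt.mul (hx₀1 t ht).hasDerivAt).sub
          ((hx1 t ht).hasDerivAt.mul (hx₀2 t ht).hasDerivAt)))
    have hev : w =ᶠ[𝓝 t]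
        (fun s => Real.exp (A s) * (deriv x s * x₀ s - x s * deriv x₀ s)) :=
      Filter.eventuallyEq_of_mem (hJo.mem_nhds ht) hwV
    have hderivw : deriv w t
        = Real.exp (A t) * a₁ t * (deriv x t * x₀ t - x t * deriv x₀ t)
          + Real.exp (A t) * ((deriv (deriv x) t * x₀ t + deriv x t * deriv x₀ t)
            - (deriv x t * deriv x₀ t + x t * deriv (deriv x₀) t)) := by
      rw [hev.deriv_eq, hVd.deriv]
    have hXX : deriv (deriv x) t = R t - a₁ t * deriv x t - a₂ t * x t := by
      have := hx3 t ht; linarith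
    have hXX₀ : deriv (deriv x₀) t = -(a₁ t * deriv x₀ t) - a₂ t * x₀ t := by
      have := hx₀3 t ht
      simp only at this
      linarith
    rw [hderivw, hXX, hXX₀]
    ring
  -- the zero-counting chain : x cannot have l+3 zeros with multiplicity
  have hnoMZ : ¬ MZ J x (l + 3) := by
    intro hMZ
    have h1 : MZ J y (l + 3) := hMZ.mul_left hJo (hx₀Sm.inv hx₀ne) hxSm
    have h2 : MZ J (deriv y) (l + 2) :=
      MZ.deriv hJo hJc (fun t ht => hySm.diffAt hJo ht) h1
    have h3 : MZ J w (l + 2) := h2.mul_left hJo hg₁Sm (hySm.deriv hJo)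
    have h4 : MZ J (deriv w) (l + 1) :=
      MZ.deriv hJo hJc (fun t ht => hwSm.diffAt hJo ht) h3
    have h5 : MZ J (fun s => x₀ s * Real.exp (A s) * R s) (l + 1) := h4.congr hJo hkey
    have hprodSm : Sm J (fun s => x₀ s * Real.exp (A s) * R s) :=
      (hx₀Sm.mul hESm).mul hRSm
    have hinvSm : Sm J (fun s => (x₀ s * Real.exp (A s))⁻¹) :=
      (hx₀Sm.mul hESm).inv (fun t ht => mul_ne_zero (hx₀ne t ht) (Real.exp_ne_zero _))
    have h6 : MZ J
        (fun s => (x₀ s * Real.exp (A s))⁻¹ * (x₀ s * Real.exp (A s) * R s)) (l + 1) :=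
      h5.mul_left hJo hinvSm hprodSm
    have h7 : MZ J R (l + 1) := by
      refine h6.congr hJo (fun t ht => ?_)
      have h₀ := hx₀ne t ht
      have hE := Real.exp_ne_zero (A t)
      field_simp
    -- contradiction with the exact count of zeros of R
    obtain ⟨ZR, hZR, hZRsum⟩ := hRzeros
    obtain ⟨Z1, m1, hZ1J, hm11, hord1, hsum1⟩ := h7
    have hsub : Z1 ⊆ ZR := fun t ht =>
      (hZR t).2 ⟨hZ1J t ht, zero_of_ordGE (hord1 t ht) (hm11 t ht)⟩
    have hle : ∀ t ∈ Z1, m1 t ≤ zeroOrder R t := by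
      intro t ht
      have hne2 : {k : ℕ | iteratedDeriv k R t ≠ 0}.Nonempty := by
        by_contra hempty
        rw [Set.not_nonempty_iff_eq_empty] at hempty
        have hall : ∀ k, iteratedDeriv k R t = 0 := by
          intro k
          by_contra hk
          exact (Set.eq_empty_iff_forall_notMem.1 hempty k) hk
        have hev := eventually_zero_of_iteratedDeriv_zero (hR t (hZ1J t ht)) hall
        have hzero := hR.eqOn_zero_of_preconnected_of_eventuallyEq_zero
          hJc.isPreconnected (hZ1J t ht)
          (by filter_upwards [hev] with s hs; simpa using hs)
        obtain ⟨t₁, ht₁J, ht₁⟩ := hRne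
        exact ht₁ (by simpa using hzero ht₁J)
      refine le_csInf hne2 (fun k hk => ?_)
      by_contra hlt
      exact hk (hord1 t ht k (by omega))
    have hfin : (l + 1 : ℕ) ≤ l := by
      calc l + 1 ≤ ∑ t ∈ Z1, m1 t := hsum1
        _ ≤ ∑ t ∈ Z1, zeroOrder R t := Finset.sum_le_sum hle
        _ ≤ ∑ t ∈ ZR, zeroOrder R t :=
            Finset.sum_le_sum_of_subset hsub
        _ = l := hZRsum
    omega
  -- the zero set of x in J is finite
  have hSfin : {t | t ∈ J ∧ x t = 0}.Finite := by
    rw [← Set.not_infinite]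
    intro hinf
    obtain ⟨T, hTsub, hTcard⟩ := hinf.exists_subset_card_eq (l + 3)
    apply hnoMZ
    refine ⟨T, fun _ => 1, ?_, fun _ _ => le_rfl, ?_, ?_⟩
    · intro t ht
      exact (hTsub (Finset.mem_coe.2 ht)).1
    · intro t ht k hk
      obtain rfl : k = 0 := by simpa [Nat.lt_one_iff] using hk
      simpa [iteratedDeriv_zero] using (hTsub (Finset.mem_coe.2 ht)).2
    · simp [hTcard]
  -- conclusion
  refine ⟨hSfin.toFinset, ?_, ?_⟩
  · intro t
    simp [hSfin.mem_toFinset]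
  · by_contra hgt
    push_neg at hgt
    apply hnoMZ
    refine ⟨hSfin.toFinset.filter (fun t => zeroOrder x t ≠ 0), zeroOrder x, ?_, ?_, ?_, ?_⟩
    · intro t ht
      exact (hSfin.mem_toFinset.1 (Finset.mem_filter.1 ht).1).1
    · intro t ht
      have := (Finset.mem_filter.1 ht).2
      omega
    · intro t ht k hk
      by_contra hk0
      have hle : zeroOrder x t ≤ k := Nat.sInf_le hk0
      omega
    · rw [Finset.sum_filter_ne_zero]
      omega
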